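/- arXiv:2006.13286 — 5 statements merged into one kernel-verified Lean document; each statement's English description precedes it below -/
import Mathlib

section
/- Let H be exponential with rate 1/λ (mean λ > 0) and D be an independent random variable with density f_D(y) = (2/(α R₁²)) y^{2/α − 1} on [0, R₁^α]. Then the random variable g = H/D has probability density f_g(x) = (2 λ^{2/α}/(α R₁² x^{2/α + 1})) · γ(2/α + 1, R₁^α x/λ) for x > 0, where γ is the lower incomplete gamma function. -/
open MeasureTheory

/-- The lower incomplete gamma function `γ(a,b) = ∫₀ᵇ t^(a−1) e^(−t) dt`. -/
noncomputable def lowerGamma (a b : ℝ) : ℝ :=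
  ∫ t in Set.Ioc (0 : ℝ) b, t ^ (a - 1) * Real.exp (-t)

open ENNReal

section Aux

lemma lintegral_scale (y : ℝ) (hy : 0 < y) (φ : ℝ → ℝ≥0∞) (hφ : Measurable φ) :
    ∫⁻ h, φ h = ENNReal.ofReal y * ∫⁻ x, φ (y * x) := by
  have h1 : ∫⁻ x, φ (y * x) = ∫⁻ h, φ h ∂(Measure.map (y * ·) volume) :=
    (lintegral_map hφ (measurable_const_mul y)).symm
  rw [h1, Real.map_volume_mul_left hy.ne', lintegral_smul_measure, smul_eq_mul, ← mul_assoc,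
    ← ENNReal.ofReal_mul hy.le, abs_of_pos (inv_pos.mpr hy), mul_inv_cancel₀ hy.ne',
    ENNReal.ofReal_one, one_mul]

lemma prod_wd (f g : ℝ → ℝ≥0∞) (hf : Measurable f) (hg : Measurable g)
    (hf' : ∀ y, f y ≠ ∞) (hg' : ∀ y, g y ≠ ∞) :
    ((volume : Measure ℝ).withDensity f).prod ((volume : Measure ℝ).withDensity g) =
      ((volume : Measure ℝ).prod volume).withDensity (fun p => f p.1 * g p.2) := by
  have : SigmaFinite ((volume : Measure ℝ).withDensity g) :=
    SigmaFinite.withDensity_of_ne_top' hg'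
  have : SigmaFinite ((volume : Measure ℝ).withDensity f) :=
    SigmaFinite.withDensity_of_ne_top' hf'
  refine Measure.prod_eq fun s t hs ht => ?_
  rw [withDensity_apply _ (hs.prod ht), ← Measure.prod_restrict,
    lintegral_prod_mul hf.aemeasurable hg.aemeasurable,
    withDensity_apply _ hs, withDensity_apply _ ht]

lemma integrable_part (R₁ α lam x : ℝ) (hR₁ : 0 < R₁) (hα : 0 < α) (hlam : 0 < lam)
    (hx : 0 < x) :
    IntegrableOn (fun y => 2 / (α * R₁ ^ 2) * y ^ (2/α - 1) * y *
      ((1/lam) * Real.exp (-(y * x) / lam))) (Set.Ioc 0 (R₁ ^ α)) volume := by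
  have hb : (0:ℝ) ≤ R₁ ^ α := (Real.rpow_pos_of_pos hR₁ α).le
  have h1 : IntervalIntegrable (fun y : ℝ => y ^ (2/α - 1)) volume 0 (R₁ ^ α) :=
    intervalIntegral.intervalIntegrable_rpow' (by have := div_pos two_pos hα; linarith)
  have h2 : IntervalIntegrable (fun y : ℝ => y ^ (2/α - 1) *
      (2 / (α * R₁ ^ 2) * y * ((1/lam) * Real.exp (-(y * x) / lam)))) volume 0 (R₁ ^ α) :=
    h1.mul_continuousOn (by fun_prop)
  have h3 := (intervalIntegrable_iff_integrableOn_Ioc_of_le hb).mp h2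
  exact h3.congr_fun (fun y _ => by ring) measurableSet_Ioc

lemma real_part (R₁ α lam x : ℝ) (hR₁ : 0 < R₁) (hα : 0 < α) (hlam : 0 < lam) (hx : 0 < x) :
    ∫ y in Set.Ioc (0:ℝ) (R₁ ^ α), 2 / (α * R₁ ^ 2) * y ^ (2/α - 1) * y *
        ((1/lam) * Real.exp (-(y * x) / lam))
      = 2 * lam ^ (2/α) / (α * R₁ ^ 2 * x ^ (2/α + 1)) *
          lowerGamma (2/α + 1) (R₁ ^ α * x / lam) := by
  have hb : (0:ℝ) < R₁ ^ α := Real.rpow_pos_of_pos hR₁ α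
  have hxl : (0:ℝ) < x / lam := div_pos hx hlam
  have hr : (0:ℝ) < 2 / α := div_pos two_pos hα
  set C : ℝ := 2 / (α * R₁ ^ 2 * lam) * (lam / x) ^ (2/α) with hC
  have hcongr : ∀ y ∈ Set.uIcc (0:ℝ) (R₁ ^ α),
      2 / (α * R₁ ^ 2) * y ^ (2/α - 1) * y * ((1/lam) * Real.exp (-(y * x) / lam))
        = C * ((y * (x / lam)) ^ (2/α) * Real.exp (-(y * (x / lam)))) := by
    intro y hy
    rw [Set.uIcc_of_le hb.le] at hy
    rcases eq_or_lt_of_le hy.1 with h0 | h0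
    · rw [← h0]
      simp [Real.zero_rpow hr.ne', Real.zero_rpow, hr.ne']
    · have e1 : -(y * x) / lam = -(y * (x / lam)) := by ring
      have e2 : (y * (x / lam)) ^ (2/α) = y ^ (2/α) * (x / lam) ^ (2/α) :=
        Real.mul_rpow h0.le hxl.le
      have e3 : y ^ (2/α - 1) * y = y ^ (2/α) := by
        rw [← Real.rpow_add_one h0.ne' (2/α - 1)]; ring_nf
      have e4 : (lam / x) ^ (2/α) * (x / lam) ^ (2/α) = 1 := by
        rw [← Real.mul_rpow (div_pos hlam hx).le hxl.le,
          div_mul_div_comm, mul_comm lam x, div_self (by positivity), Real.one_rpow]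
      rw [e1, e2, hC]
      linear_combination (-2 / (α * R₁ ^ 2 * lam) * y ^ (2/α) *
          Real.exp (-(y * (x/lam)))) * e4 +
        (2 / (α * R₁ ^ 2 * lam) * Real.exp (-(y * (x/lam)))) * e3
  have hB : (0:ℝ) ≤ R₁ ^ α * (x / lam) := by positivity
  have hγ : lowerGamma (2/α + 1) (R₁ ^ α * x / lam)
      = ∫ t in (0:ℝ)..(R₁ ^ α * (x / lam)), t ^ (2/α) * Real.exp (-t) := by
    rw [lowerGamma, intervalIntegral.integral_of_le hB, mul_div_assoc]
    simp only [add_sub_cancel_right]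
  rw [← intervalIntegral.integral_of_le hb.le, intervalIntegral.integral_congr hcongr,
    intervalIntegral.integral_const_mul,
    intervalIntegral.integral_comp_mul_right (fun t => t ^ (2/α) * Real.exp (-t)) hxl.ne',
    zero_mul, ← hγ, smul_eq_mul, ← mul_assoc]
  congr 1
  have hxr : (0:ℝ) < x ^ (2/α) := Real.rpow_pos_of_pos hx _
  have hlr : (0:ℝ) < lam ^ (2/α) := Real.rpow_pos_of_pos hlam _
  rw [hC, Real.div_rpow hlam.le hx.le, Real.rpow_add_one hx.ne' (2/α)]
  field_simp

noncomputable def fH (lam : ℝ) : ℝ → ℝ≥0∞ := fun h =>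
  ENNReal.ofReal (Set.indicator (Set.Ioi 0) (fun t => (1 / lam) * Real.exp (-t / lam)) h)

noncomputable def gD (R₁ α : ℝ) : ℝ → ℝ≥0∞ := fun y =>
  ENNReal.ofReal (Set.indicator (Set.Ioc 0 (R₁ ^ α))
    (fun z => 2 / (α * R₁ ^ 2) * z ^ (2 / α - 1)) y)

noncomputable def tgt (R₁ α lam : ℝ) : ℝ → ℝ≥0∞ := fun x =>
  ENNReal.ofReal (Set.indicator (Set.Ioi 0)
    (fun z => 2 * lam ^ (2 / α) / (α * R₁ ^ 2 * z ^ (2 / α + 1)) *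
      lowerGamma (2 / α + 1) (R₁ ^ α * z / lam)) x)

lemma fH_meas (lam : ℝ) : Measurable (fH lam) := by
  unfold fH
  exact (((measurable_const.mul (by fun_prop)).indicator measurableSet_Ioi)).ennreal_ofReal

lemma gD_meas (R₁ α : ℝ) : Measurable (gD R₁ α) := by
  unfold gD
  exact ((measurable_const.mul (measurable_id.pow_const _)).indicator
    measurableSet_Ioc).ennreal_ofReal

lemma key (R₁ α lam : ℝ) (hR₁ : 0 < R₁) (hα : 0 < α) (hlam : 0 < lam) :
    Measure.map (fun p : ℝ × ℝ => p.1 / p.2)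
      (((volume : Measure ℝ).prod volume).withDensity (fun p => fH lam p.1 * gD R₁ α p.2)) =
      (volume : Measure ℝ).withDensity (tgt R₁ α lam) := by
  have hb : (0:ℝ) < R₁ ^ α := Real.rpow_pos_of_pos hR₁ α
  have hfm : Measurable (fH lam) := fH_meas lam
  have hgm : Measurable (gD R₁ α) := gD_meas R₁ α
  set K : ℝ → ℝ → ℝ≥0∞ := fun x y => gD R₁ α y * ENNReal.ofReal y * fH lam (y * x) with hK
  have hKm : Measurable (Function.uncurry K) := by
    refine Measurable.mul (f := fun p : ℝ × ℝ => gD R₁ α p.2 * ENNReal.ofReal p.2)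
      (g := fun p : ℝ × ℝ => fH lam (p.2 * p.1)) ?_ ?_
    refine Measurable.mul (f := fun p : ℝ × ℝ => gD R₁ α p.2)
      (g := fun p : ℝ × ℝ => ENNReal.ofReal p.2) ?_ ?_
    · exact hgm.comp measurable_snd
    · exact measurable_snd.ennreal_ofReal
    · exact hfm.comp (measurable_snd.mul measurable_fst)
  have claim : ∀ x : ℝ, ∫⁻ y, K x y ∂volume = tgt R₁ α lam x := by
    intro x
    rcases le_or_gt x 0 with hx | hx
    · have hz : ∀ y, K x y = 0 := by
        intro y
        by_cases hy : y ∈ Set.Ioc (0:ℝ) (R₁ ^ α)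
        · have : y * x ∉ Set.Ioi (0:ℝ) := by
            simp only [Set.mem_Ioi, not_lt]
            exact mul_nonpos_of_nonneg_of_nonpos hy.1.le hx
          simp [hK, fH, Set.indicator_of_notMem this]
        · simp [hK, gD, Set.indicator_of_notMem hy]
      simp only [hz, lintegral_zero]
      have : x ∉ Set.Ioi (0:ℝ) := by simpa using hx
      simp [tgt, Set.indicator_of_notMem this]
    · have hres : ∫⁻ y, K x y ∂volume = ∫⁻ y in Set.Ioc 0 (R₁ ^ α), K x y ∂volume := by
        rw [← lintegral_indicator measurableSet_Ioc]
        refine lintegral_congr fun y => ?_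
        by_cases hy : y ∈ Set.Ioc (0:ℝ) (R₁ ^ α)
        · rw [Set.indicator_of_mem hy]
        · rw [Set.indicator_of_notMem hy]
          simp [hK, gD, Set.indicator_of_notMem hy]
      have hptw : ∀ y ∈ Set.Ioc (0:ℝ) (R₁ ^ α), K x y =
          ENNReal.ofReal (2 / (α * R₁ ^ 2) * y ^ (2/α - 1) * y *
            ((1/lam) * Real.exp (-(y * x) / lam))) := by
        intro y hy
        have hy0 : (0:ℝ) < y := hy.1
        have hyx : y * x ∈ Set.Ioi (0:ℝ) := mul_pos hy0 hx
        rw [hK]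
        simp only [fH, gD, Set.indicator_of_mem hy, Set.indicator_of_mem hyx]
        rw [← ENNReal.ofReal_mul (by positivity), ← ENNReal.ofReal_mul (by positivity)]
      rw [hres, setLIntegral_congr_fun measurableSet_Ioc hptw]
      rw [← ofReal_integral_eq_lintegral_ofReal
        (integrable_part R₁ α lam x hR₁ hα hlam hx)
        ((ae_restrict_iff' measurableSet_Ioc).mpr
          (ae_of_all _ fun y hy => by have hy0 : (0:ℝ) < y := hy.1; positivity))]
      rw [real_part R₁ α lam x hR₁ hα hlam hx]
      have hxI : x ∈ Set.Ioi (0:ℝ) := hx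
      simp [tgt, Set.indicator_of_mem hxI]
  ext s hs
  set χ : ℝ → ℝ≥0∞ := fun x => Set.indicator s (fun _ => (1:ℝ≥0∞)) x with hχ
  have hχm : Measurable χ := measurable_const.indicator hs
  have hχ_le : ∀ x, χ x ≠ ∞ := by
    intro x
    by_cases hxs : x ∈ s <;> simp [hχ, hxs]
  rw [Measure.map_apply (show Measurable (fun p : ℝ × ℝ => p.1 / p.2) from measurable_fst.div measurable_snd) hs,
    withDensity_apply _ ((show Measurable (fun p : ℝ × ℝ => p.1 / p.2) from measurable_fst.div measurable_snd) hs),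
    ← lintegral_indicator ((show Measurable (fun p : ℝ × ℝ => p.1 / p.2) from measurable_fst.div measurable_snd) hs)]
  have hind : ∀ p : ℝ × ℝ,
      Set.indicator ((fun p : ℝ × ℝ => p.1 / p.2) ⁻¹' s)
        (fun p : ℝ × ℝ => fH lam p.1 * gD R₁ α p.2) p
      = fH lam p.1 * gD R₁ α p.2 * χ (p.1 / p.2) := by
    intro p
    by_cases hp : p.1 / p.2 ∈ s <;>
      simp [hχ, Set.indicator, Set.mem_preimage, hp]
  rw [lintegral_congr hind]
  rw [lintegral_prod_symm _ (by fun_prop : Measurable fun p : ℝ × ℝ =>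
      fH lam p.1 * gD R₁ α p.2 * χ (p.1 / p.2)).aemeasurable]
  have hinner : ∀ y : ℝ, (∫⁻ h, fH lam h * gD R₁ α y * χ (h / y) ∂volume)
      = ∫⁻ x, K x y * χ x ∂volume := by
    intro y
    by_cases hy : y ∈ Set.Ioc (0:ℝ) (R₁ ^ α)
    · have hy0 : 0 < y := hy.1
      have hφm : Measurable (fun h => fH lam h * χ (h / y) * gD R₁ α y) := by fun_prop
      calc ∫⁻ h, fH lam h * gD R₁ α y * χ (h / y) ∂volume
          = ∫⁻ h, fH lam h * χ (h / y) * gD R₁ α y ∂volume := by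
            refine lintegral_congr fun h => by ring
        _ = ENNReal.ofReal y * ∫⁻ x, fH lam (y * x) * χ ((y * x) / y) * gD R₁ α y ∂volume :=
            lintegral_scale y hy0 _ hφm
        _ = ∫⁻ x, K x y * χ x ∂volume := by
            rw [← lintegral_const_mul _ (by fun_prop)]
            refine lintegral_congr fun x => ?_
            rw [mul_div_cancel_left₀ x hy0.ne', hK]
            ring
    · have hgy : gD R₁ α y = 0 := by simp [gD, Set.indicator_of_notMem hy]
      have hKy : ∀ x, K x y = 0 := fun x => by simp [hK, hgy]
      simp [hgy, hKy]
  rw [lintegral_congr hinner]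
  rw [← lintegral_lintegral_swap (by fun_prop : Measurable (Function.uncurry fun x y =>
      K x y * χ x)).aemeasurable]
  rw [withDensity_apply _ hs, ← lintegral_indicator hs]
  refine lintegral_congr fun x => ?_
  rw [lintegral_mul_const' (χ x) _ (hχ_le x), claim x]
  by_cases hxs : x ∈ s
  · rw [Set.indicator_of_mem hxs, hχ]; simp [Set.indicator_of_mem hxs]
  · rw [Set.indicator_of_notMem hxs, hχ]; simp [Set.indicator_of_notMem hxs]

end Aux

/-- If `H ~ Exp(1/λ)` (mean `λ`) and `D` is independent with density
`(2/(α R₁²)) y^(2/α − 1)` on `[0, R₁^α]`, then `g = H/D` has density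
`(2 λ^(2/α)/(α R₁² x^(2/α+1))) γ(2/α + 1, R₁^α x/λ)` for `x > 0`. -/
theorem ratio_pdf_near {Ω : Type*} [MeasurableSpace Ω]
    (ℙ : Measure Ω) [IsProbabilityMeasure ℙ]
    (R₁ α lam : ℝ) (hR₁ : 0 < R₁) (hα : 0 < α) (hlam : 0 < lam)
    (H D : Ω → ℝ) (hH : Measurable H) (hD : Measurable D)
    (hindep : ProbabilityTheory.IndepFun H D ℙ)
    (hHpdf : Measure.map H ℙ =
      (volume : Measure ℝ).withDensity (fun h =>
        ENNReal.ofReal (Set.indicator (Set.Ioi 0)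
          (fun t => (1 / lam) * Real.exp (-t / lam)) h)))
    (hDpdf : Measure.map D ℙ =
      (volume : Measure ℝ).withDensity (fun y =>
        ENNReal.ofReal (Set.indicator (Set.Icc 0 (R₁ ^ α))
          (fun z => 2 / (α * R₁ ^ 2) * z ^ (2 / α - 1)) y))) :
    Measure.map (fun ω => H ω / D ω) ℙ =
      (volume : Measure ℝ).withDensity (fun x =>
        ENNReal.ofReal (Set.indicator (Set.Ioi 0)
          (fun z => 2 * lam ^ (2 / α) / (α * R₁ ^ 2 * z ^ (2 / α + 1)) *
            lowerGamma (2 / α + 1) (R₁ ^ α * z / lam)) x)) := by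
  have hcomp : (fun ω => H ω / D ω)
      = (fun p : ℝ × ℝ => p.1 / p.2) ∘ (fun ω => (H ω, D ω)) := rfl
  have hmap := (ProbabilityTheory.indepFun_iff_map_prod_eq_prod_map_map
    hH.aemeasurable hD.aemeasurable).mp hindep
  have hae : (fun y => ENNReal.ofReal (Set.indicator (Set.Icc 0 (R₁ ^ α))
      (fun z => 2 / (α * R₁ ^ 2) * z ^ (2 / α - 1)) y)) =ᵐ[volume] gD R₁ α := by
    have h0 : ∀ᵐ (y : ℝ) ∂(volume : Measure ℝ), y ≠ 0 := by
      rw [ae_iff]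
      convert Real.volume_singleton (a := (0:ℝ)) using 2
      ext y; simp
    filter_upwards [h0] with y hy
    unfold gD
    congr 1
    by_cases hIcc : y ∈ Set.Icc 0 (R₁ ^ α)
    · have hIoc : y ∈ Set.Ioc 0 (R₁ ^ α) := ⟨lt_of_le_of_ne hIcc.1 (Ne.symm hy), hIcc.2⟩
      rw [Set.indicator_of_mem hIcc, Set.indicator_of_mem hIoc]
    · have hIoc : y ∉ Set.Ioc 0 (R₁ ^ α) := fun h => hIcc ⟨h.1.le, h.2⟩
      rw [Set.indicator_of_notMem hIcc, Set.indicator_of_notMem hIoc]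
  rw [hcomp, ← Measure.map_map (show Measurable (fun p : ℝ × ℝ => p.1 / p.2) from measurable_fst.div measurable_snd) (hH.prodMk hD),
    hmap, hHpdf, hDpdf, withDensity_congr_ae hae]
  have : ((volume : Measure ℝ).withDensity (fH lam)).prod
      ((volume : Measure ℝ).withDensity (gD R₁ α)) =
      ((volume : Measure ℝ).prod volume).withDensity (fun p => fH lam p.1 * gD R₁ α p.2) :=
    prod_wd _ _ (fH_meas lam) (gD_meas R₁ α) (fun _ => ofReal_ne_top) (fun _ => ofReal_ne_top)
  rw [show (fun h => ENNReal.ofReal (Set.indicator (Set.Ioi 0)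
      (fun t => (1 / lam) * Real.exp (-t / lam)) h)) = fH lam from rfl, this,
    key R₁ α lam hR₁ hα hlam]
  rfl
end

section
/- Let H be exponential with rate 1/λ and D be independent with density f_D(y) = (2/(α(R₂² − R₁²))) y^{2/α − 1} on [R₁^α, R₂^α]. Then g = H/D has density f_g(x) = (2λ^{2/α}/(α(R₂² − R₁²) x^{2/α + 1})) · [γ(2/α + 1, R₂^α x/λ) − γ(2/α + 1, R₁^α x/λ)] for x > 0. -/
open MeasureTheory

lemma integ_rpow_exp {p b : ℝ} (hp : 0 ≤ p) :
    IntegrableOn (fun u : ℝ => u ^ p * Real.exp (-u)) (Set.Ioc 0 b) volume := by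
  have hm : Measurable fun u : ℝ => u ^ p * Real.exp (-u) := by fun_prop
  apply Integrable.mono' (integrable_const (b ^ p)) hm.aestronglyMeasurable
  filter_upwards [ae_restrict_mem measurableSet_Ioc] with u hu
  have h1 : u ^ p ≤ b ^ p := Real.rpow_le_rpow hu.1.le hu.2 hp
  have h2 : Real.exp (-u) ≤ 1 := Real.exp_le_one_iff.2 (by linarith [hu.1])
  have h3 : (0:ℝ) ≤ u ^ p := Real.rpow_nonneg hu.1.le p
  rw [Real.norm_eq_abs, abs_of_nonneg (by positivity)]
  calc u ^ p * Real.exp (-u) ≤ u ^ p * 1 := by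
        exact mul_le_mul_of_nonneg_left h2 h3
    _ ≤ b ^ p := by rw [mul_one]; exact h1

lemma gamma_diff {p a b : ℝ} (hp : 0 ≤ p) (h0 : 0 < a) (hab : a ≤ b) :
    lowerGamma (p+1) b - lowerGamma (p+1) a = ∫ u in a..b, u ^ p * Real.exp (-u) := by
  have hsimp : ∀ b', lowerGamma (p+1) b' = ∫ t in Set.Ioc (0:ℝ) b', t ^ p * Real.exp (-t) := by
    intro b'; unfold lowerGamma; simp [add_sub_cancel_right]
  rw [hsimp, hsimp, intervalIntegral.integral_of_le hab]
  have hunion : Set.Ioc (0:ℝ) a ∪ Set.Ioc a b = Set.Ioc 0 b :=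
    Set.Ioc_union_Ioc_eq_Ioc h0.le hab
  have hdisj : Disjoint (Set.Ioc (0:ℝ) a) (Set.Ioc a b) := Set.Ioc_disjoint_Ioc_of_le le_rfl
  rw [← hunion, setIntegral_union hdisj measurableSet_Ioc
    (integ_rpow_exp hp) ((integ_rpow_exp (b := b) hp).mono_set (Set.Ioc_subset_Ioc h0.le le_rfl))]
  ring

lemma int_key {p lam t A B : ℝ} (c : ℝ) (hp : 0 < p) (hlam : 0 < lam) (ht : 0 < t)
    (hA : 0 < A) (hAB : A ≤ B) :
    ∫ y in A..B, c * y ^ p * ((1/lam) * Real.exp (-(t*y)/lam))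
      = c * lam ^ p / t ^ (p+1) *
        (lowerGamma (p+1) (B*t/lam) - lowerGamma (p+1) (A*t/lam)) := by
  have htlam : t / lam ≠ 0 := by positivity
  set f : ℝ → ℝ := fun u => c * (lam * u / t) ^ p * ((1/lam) * Real.exp (-u)) with hf
  have h1 : ∀ y, c * y ^ p * ((1/lam) * Real.exp (-(t*y)/lam)) = f (t/lam * y) := by
    intro y
    have : lam * (t/lam * y) / t = y := by field_simp
    rw [hf]; simp only [this]
    congr 2
    field_simp
  calc ∫ y in A..B, c * y ^ p * ((1/lam) * Real.exp (-(t*y)/lam))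
      = ∫ y in A..B, f (t/lam * y) := by simp only [h1]
    _ = (t/lam)⁻¹ • ∫ u in (t/lam*A)..(t/lam*B), f u :=
        intervalIntegral.integral_comp_mul_left f htlam
    _ = (t/lam)⁻¹ • ∫ u in (t/lam*A)..(t/lam*B),
          (c * (lam/t) ^ p * (1/lam)) * (u ^ p * Real.exp (-u)) := by
        congr 1
        apply intervalIntegral.integral_congr
        intro u hu
        have hu0 : 0 ≤ u := by
          rcases hu with ⟨h1', _⟩
          have : 0 < t/lam*A := by positivity
          have hmin : min (t/lam*A) (t/lam*B) = t/lam*A := by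
            apply min_eq_left
            have := mul_le_mul_of_nonneg_left hAB (le_of_lt (by positivity : (0:ℝ) < t/lam))
            linarith
          rw [hmin] at h1'
          linarith
        have : (lam * u / t) ^ p = (lam/t) ^ p * u ^ p := by
          rw [show lam * u / t = (lam/t) * u by ring,
            Real.mul_rpow (by positivity) hu0]
        rw [hf]; simp only [this]; ring
    _ = (t/lam)⁻¹ • ((c * (lam/t) ^ p * (1/lam)) * ∫ u in (t/lam*A)..(t/lam*B),
          u ^ p * Real.exp (-u)) := by rw [intervalIntegral.integral_const_mul]
    _ = c * lam ^ p / t ^ (p+1) *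
        (lowerGamma (p+1) (B*t/lam) - lowerGamma (p+1) (A*t/lam)) := by
        rw [show t/lam*A = A*t/lam by ring, show t/lam*B = B*t/lam by ring,
          ← gamma_diff hp.le (by positivity) (by
            gcongr)]
        have h2 : (lam/t) ^ p = lam ^ p / t ^ p := Real.div_rpow hlam.le ht.le p
        have h3 : t ^ (p+1) = t ^ p * t := Real.rpow_add_one ht.ne' p
        have hpt : (0:ℝ) < t ^ p := Real.rpow_pos_of_pos ht p
        have hpl : (0:ℝ) < lam ^ p := Real.rpow_pos_of_pos hlam p
        rw [smul_eq_mul, h2, h3]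
        field_simp

lemma density_eq {p lam A B c : ℝ} (hp : 0 < p) (hlam : 0 < lam) (hA : 0 < A)
    (hAB : A ≤ B) (hc : 0 ≤ c) (t : ℝ) :
    (∫⁻ y, ENNReal.ofReal ((Set.Icc A B).indicator (fun z => c * z ^ (p-1)) y)
        * ENNReal.ofReal y
        * ENNReal.ofReal ((Set.Ioi (0:ℝ)).indicator
            (fun u => (1/lam) * Real.exp (-u/lam)) (t*y)) ∂volume)
      = ENNReal.ofReal ((Set.Ioi (0:ℝ)).indicator
          (fun z => c * lam ^ p / z ^ (p+1) *
            (lowerGamma (p+1) (B*z/lam) - lowerGamma (p+1) (A*z/lam))) t) := by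
  by_cases ht : 0 < t
  · -- positive case
    set ψ : ℝ → ℝ := (Set.Icc A B).indicator
      (fun y => c * y ^ p * ((1/lam) * Real.exp (-(t*y)/lam))) with hψ
    have hpt : ∀ y, ENNReal.ofReal ((Set.Icc A B).indicator (fun z => c * z ^ (p-1)) y)
        * ENNReal.ofReal y
        * ENNReal.ofReal ((Set.Ioi (0:ℝ)).indicator
            (fun u => (1/lam) * Real.exp (-u/lam)) (t*y))
        = ENNReal.ofReal (ψ y) := by
      intro y
      by_cases hy : y ∈ Set.Icc A B
      · have hy0 : 0 < y := lt_of_lt_of_le hA hy.1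
        have hty : t * y ∈ Set.Ioi (0:ℝ) := mul_pos ht hy0
        rw [hψ, Set.indicator_of_mem hy, Set.indicator_of_mem hy,
          Set.indicator_of_mem hty,
          ← ENNReal.ofReal_mul (by positivity),
          ← ENNReal.ofReal_mul (by positivity)]
        congr 1
        have hyp : y ^ (p-1) * y = y ^ p := by
          rw [← Real.rpow_add_one hy0.ne' (p-1), sub_add_cancel]
        calc c * y ^ (p-1) * y * ((1/lam) * Real.exp (-(t*y)/lam))
            = c * (y ^ (p-1) * y) * ((1/lam) * Real.exp (-(t*y)/lam)) := by ring
          _ = c * y ^ p * ((1/lam) * Real.exp (-(t*y)/lam)) := by rw [hyp]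
      · rw [hψ, Set.indicator_of_notMem hy, Set.indicator_of_notMem hy]
        simp
    simp only [hpt]
    have hcontOn : ContinuousOn (fun y : ℝ => c * y ^ p * ((1/lam) * Real.exp (-(t*y)/lam)))
        (Set.Icc A B) := by
      apply ContinuousOn.mul
      · apply ContinuousOn.mul continuousOn_const
        exact ContinuousOn.rpow_const continuousOn_id
          (fun y hy => Or.inl (ne_of_gt (lt_of_lt_of_le hA hy.1)))
      · exact (Continuous.continuousOn (by continuity))
    have hInt : Integrable ψ volume := by
      rw [hψ]
      exact (hcontOn.integrableOn_Icc).integrable_indicator measurableSet_Icc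
    have hnn : 0 ≤ᵐ[volume] ψ := by
      refine Filter.Eventually.of_forall (fun y => ?_)
      rw [hψ]
      apply Set.indicator_nonneg
      intro y hy
      have hy0 : 0 < y := lt_of_lt_of_le hA hy.1
      positivity
    rw [← ofReal_integral_eq_lintegral_ofReal hInt hnn, hψ,
      integral_indicator measurableSet_Icc,
      integral_Icc_eq_integral_Ioc, ← intervalIntegral.integral_of_le hAB,
      int_key c hp hlam ht hA hAB, Set.indicator_of_mem (Set.mem_Ioi.2 ht)]
  · -- nonpositive case
    rw [Set.indicator_of_notMem (by simpa using ht), ENNReal.ofReal_zero]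
    have hz : ∀ y : ℝ, ENNReal.ofReal ((Set.Icc A B).indicator (fun z => c * z ^ (p-1)) y)
        * ENNReal.ofReal y
        * ENNReal.ofReal ((Set.Ioi (0:ℝ)).indicator
            (fun u => (1/lam) * Real.exp (-u/lam)) (t*y)) = 0 := by
      intro y
      by_cases hy : y ∈ Set.Icc A B
      · have hy0 : 0 < y := lt_of_lt_of_le hA hy.1
        have : t * y ∉ Set.Ioi (0:ℝ) := by
          simp only [Set.mem_Ioi, not_lt]
          exact mul_nonpos_of_nonpos_of_nonneg (not_lt.1 ht) hy0.le
        rw [Set.indicator_of_notMem this]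
        simp
      · rw [Set.indicator_of_notMem hy]
        simp
    simp only [hz, lintegral_zero]

/-- If `H ~ Exp(1/λ)` and `D` is independent with density
`(2/(α(R₂² − R₁²))) y^(2/α − 1)` on `[R₁^α, R₂^α]`, then `g = H/D` has density
`(2λ^(2/α)/(α(R₂² − R₁²) x^(2/α+1))) [γ(2/α+1, R₂^α x/λ) − γ(2/α+1, R₁^α x/λ)]` for `x > 0`. -/
theorem ratio_pdf_far {Ω : Type*} [MeasurableSpace Ω]
    (ℙ : Measure Ω) [IsProbabilityMeasure ℙ]
    (R₁ R₂ α lam : ℝ) (hR₁ : 0 < R₁) (hR : R₁ < R₂) (hα : 0 < α) (hlam : 0 < lam)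
    (H D : Ω → ℝ) (hH : Measurable H) (hD : Measurable D)
    (hindep : ProbabilityTheory.IndepFun H D ℙ)
    (hHpdf : Measure.map H ℙ =
      (volume : Measure ℝ).withDensity (fun h =>
        ENNReal.ofReal (Set.indicator (Set.Ioi 0)
          (fun t => (1 / lam) * Real.exp (-t / lam)) h)))
    (hDpdf : Measure.map D ℙ =
      (volume : Measure ℝ).withDensity (fun y =>
        ENNReal.ofReal (Set.indicator (Set.Icc (R₁ ^ α) (R₂ ^ α))
          (fun z => 2 / (α * (R₂ ^ 2 - R₁ ^ 2)) * z ^ (2 / α - 1)) y))) :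
    Measure.map (fun ω => H ω / D ω) ℙ =
      (volume : Measure ℝ).withDensity (fun x =>
        ENNReal.ofReal (Set.indicator (Set.Ioi 0)
          (fun z => 2 * lam ^ (2 / α) / (α * (R₂ ^ 2 - R₁ ^ 2) * z ^ (2 / α + 1)) *
            (lowerGamma (2 / α + 1) (R₂ ^ α * z / lam) -
              lowerGamma (2 / α + 1) (R₁ ^ α * z / lam))) x)) := by
  -- abbreviations
  set A : ℝ := R₁ ^ α with hAdef
  set B : ℝ := R₂ ^ α with hBdef
  set c : ℝ := 2 / (α * (R₂ ^ 2 - R₁ ^ 2)) with hcdef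
  set fH : ℝ → ENNReal := fun h =>
    ENNReal.ofReal (Set.indicator (Set.Ioi 0) (fun t => (1 / lam) * Real.exp (-t / lam)) h)
    with hfHdef
  set fD : ℝ → ENNReal := fun y =>
    ENNReal.ofReal (Set.indicator (Set.Icc A B) (fun z => c * z ^ (2 / α - 1)) y) with hfDdef
  have hA : 0 < A := Real.rpow_pos_of_pos hR₁ α
  have hAB : A ≤ B := Real.rpow_le_rpow hR₁.le hR.le hα.le
  have hK : 0 < R₂ ^ 2 - R₁ ^ 2 := by
    have : R₁ ^ 2 < R₂ ^ 2 := by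
      apply pow_lt_pow_left₀ hR hR₁.le
      norm_num
    linarith
  have hc : 0 < c := by rw [hcdef]; positivity
  have hp : 0 < 2 / α := by positivity
  -- measurability
  have hfH : Measurable fH := by
    apply Measurable.ennreal_ofReal
    apply Measurable.indicator _ measurableSet_Ioi
    fun_prop
  have hfD : Measurable fD := by
    apply Measurable.ennreal_ofReal
    apply Measurable.indicator _ measurableSet_Icc
    fun_prop
  have hdiv : Measurable fun q : ℝ × ℝ => q.1 / q.2 := measurable_fst.div measurable_snd
  -- reduce to product measure
  have hprod : Measure.map (fun ω => (H ω, D ω)) ℙ = (Measure.map H ℙ).prod (Measure.map D ℙ) :=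
    (ProbabilityTheory.indepFun_iff_map_prod_eq_prod_map_map hH.aemeasurable hD.aemeasurable).1
      hindep
  have hmap : Measure.map (fun ω => H ω / D ω) ℙ
      = Measure.map (fun q : ℝ × ℝ => q.1 / q.2)
          (((volume : Measure ℝ).withDensity fH).prod ((volume : Measure ℝ).withDensity fD)) := by
    rw [← hHpdf, ← hDpdf, ← hprod, Measure.map_map hdiv (hH.prodMk hD)]
    rfl
  haveI i1 : IsProbabilityMeasure ((volume : Measure ℝ).withDensity fH) := by
    rw [← hHpdf]; exact Measure.isProbabilityMeasure_map hH.aemeasurable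
  haveI i2 : IsProbabilityMeasure ((volume : Measure ℝ).withDensity fD) := by
    rw [← hDpdf]; exact Measure.isProbabilityMeasure_map hD.aemeasurable
  rw [hmap]
  ext s hs
  rw [Measure.map_apply hdiv hs, withDensity_apply _ hs]
  set T : Set (ℝ × ℝ) := (fun q : ℝ × ℝ => q.1 / q.2) ⁻¹' s with hTdef
  have hT : MeasurableSet T := hdiv hs
  set F : ℝ × ℝ → ENNReal := T.indicator (fun q => fH q.1) with hFdef
  have hF : Measurable F := (hfH.comp measurable_fst).indicator hT
  set K : ℝ → ℝ → ENNReal := fun y x => fD y * ENNReal.ofReal y * fH (x * y) with hKdef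
  have hKmeas : Measurable (Function.uncurry K) := by
    apply Measurable.mul (f := fun q : ℝ × ℝ => fD q.1 * ENNReal.ofReal q.1) (g := fun q : ℝ × ℝ => fH (q.2 * q.1))
    · apply Measurable.mul (f := fun q : ℝ × ℝ => fD q.1) (g := fun q : ℝ × ℝ => ENNReal.ofReal q.1)
      · exact hfD.comp measurable_fst
      · exact ENNReal.measurable_ofReal.comp measurable_fst
    · exact hfH.comp (measurable_snd.mul measurable_fst)
  calc (((volume : Measure ℝ).withDensity fH).prod ((volume : Measure ℝ).withDensity fD)) T
      = ∫⁻ y, ((volume : Measure ℝ).withDensity fH) ((fun x => (x, y)) ⁻¹' T)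
          ∂((volume : Measure ℝ).withDensity fD) := Measure.prod_apply_symm hT
    _ = ∫⁻ y, (∫⁻ h, F (h, y) ∂volume) ∂((volume : Measure ℝ).withDensity fD) := by
        apply lintegral_congr
        intro y
        have hU : MeasurableSet ((fun x => (x, y)) ⁻¹' T) := measurable_prodMk_right hT
        rw [withDensity_apply _ hU, ← lintegral_indicator hU]
        rfl
    _ = ∫⁻ y, fD y * (∫⁻ h, F (h, y) ∂volume) ∂volume := by
        rw [lintegral_withDensity_eq_lintegral_mul volume hfD hF.lintegral_prod_left']
        rfl
    _ = ∫⁻ y, (∫⁻ x in s, K y x ∂volume) ∂volume := by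
        apply lintegral_congr
        intro y
        by_cases hy : fD y = 0
        · simp [hy, hKdef]
        · have hy0 : 0 < y := by
            by_contra hy0
            apply hy
            rw [hfDdef]
            have : y ∉ Set.Icc A B := by
              intro hmem
              exact hy0 (lt_of_lt_of_le hA hmem.1)
            simp [Set.indicator_of_notMem this]
          -- substitution h = x * y
          set U : Set ℝ := (fun h => h / y) ⁻¹' s with hUdef
          have hUm : MeasurableSet U := (measurable_div_const y) hs
          have hF2 : (fun h => F (h, y)) = U.indicator fH := by
            funext h
            have : (h, y) ∈ T ↔ h ∈ U := Iff.rfl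
            by_cases hmem : h ∈ U
            · rw [Set.indicator_of_mem hmem, hFdef, Set.indicator_of_mem (this.2 hmem)]
            · rw [Set.indicator_of_notMem hmem, hFdef,
                Set.indicator_of_notMem (fun hh => hmem (this.1 hh))]
          have hg : Measurable (U.indicator fH) := hfH.indicator hUm
          have hsub : ∫⁻ x, (U.indicator fH) (x * y) ∂volume
              = ENNReal.ofReal |y⁻¹| * ∫⁻ h, (U.indicator fH) h ∂volume := by
            rw [← lintegral_map hg (measurable_mul_const y),
              Real.map_volume_mul_right hy0.ne', lintegral_smul_measure, smul_eq_mul]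
          have hone : ENNReal.ofReal y * ENNReal.ofReal |y⁻¹| = 1 := by
            rw [← ENNReal.ofReal_mul hy0.le, abs_of_pos (by positivity),
              mul_inv_cancel₀ hy0.ne', ENNReal.ofReal_one]
          have hmain : ∫⁻ h, F (h, y) ∂volume
              = ENNReal.ofReal y * ∫⁻ x, (U.indicator fH) (x * y) ∂volume := by
            rw [hF2, hsub, ← mul_assoc, hone, one_mul]
          rw [hmain]
          have hind : ∀ x, (U.indicator fH) (x * y) = s.indicator (fun x => fH (x * y)) x := by
            intro x
            have hxy : x * y / y = x := mul_div_cancel_right₀ x hy0.ne'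
            by_cases hx : x ∈ s
            · rw [Set.indicator_of_mem hx, Set.indicator_of_mem]
              rw [hUdef]; simp only [Set.mem_preimage, hxy]; exact hx
            · rw [Set.indicator_of_notMem hx, Set.indicator_of_notMem]
              rw [hUdef]; simp only [Set.mem_preimage, hxy]; exact hx
          simp only [hind]
          rw [lintegral_indicator hs]
          rw [hKdef, ← mul_assoc, ← lintegral_const_mul' _ _ (by
            exact ENNReal.mul_ne_top (ENNReal.ofReal_ne_top) (ENNReal.ofReal_ne_top))]
    _ = ∫⁻ x in s, (∫⁻ y, K y x ∂volume) ∂volume :=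
        lintegral_lintegral_swap hKmeas.aemeasurable
    _ = ∫⁻ x in s, ENNReal.ofReal (Set.indicator (Set.Ioi 0)
          (fun z => 2 * lam ^ (2 / α) / (α * (R₂ ^ 2 - R₁ ^ 2) * z ^ (2 / α + 1)) *
            (lowerGamma (2 / α + 1) (B * z / lam) -
              lowerGamma (2 / α + 1) (A * z / lam))) x) := by
        apply lintegral_congr
        intro x
        have hde := density_eq (p := 2/α) (lam := lam) (A := A) (B := B) (c := c)
          hp hlam hA hAB hc.le x
        have hptw : ∀ z ∈ Set.Ioi (0:ℝ),
            c * lam ^ (2/α) / z ^ (2/α+1) *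
              (lowerGamma (2/α+1) (B*z/lam) - lowerGamma (2/α+1) (A*z/lam))
            = 2 * lam ^ (2 / α) / (α * (R₂ ^ 2 - R₁ ^ 2) * z ^ (2 / α + 1)) *
              (lowerGamma (2 / α + 1) (B * z / lam) -
                lowerGamma (2 / α + 1) (A * z / lam)) := by
          intro z hz
          have hz0 : (0:ℝ) < z ^ (2/α+1) := Real.rpow_pos_of_pos hz (2/α+1)
          have hα0 : α * (R₂ ^ 2 - R₁ ^ 2) ≠ 0 := by positivity
          rw [hcdef]
          field_simp
        calc ∫⁻ y, K y x ∂volume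
            = ENNReal.ofReal ((Set.Ioi (0:ℝ)).indicator
                (fun z => c * lam ^ (2/α) / z ^ (2/α+1) *
                  (lowerGamma (2/α+1) (B*z/lam) - lowerGamma (2/α+1) (A*z/lam))) x) := hde
          _ = _ := by rw [Set.indicator_congr hptw]
end

section
/- Let H be exponential with mean λ and D be independent with density f_D(y) = (2/(α R₁²)) y^{2/α − 1} on [0, R₁^α]. Then the cumulative distribution function of g = H/D satisfies F_g(x) = 1 − (2/(α R₁²)) (λ/x)^{2/α} γ(2/α, R₁^α x/λ) for all x > 0. -/
open MeasureTheory

lemma exp_int (lam t : ℝ) (hlam : 0 < lam) :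
    ∫ y in (0:ℝ)..t, (1/lam) * Real.exp (-y/lam) = 1 - Real.exp (-t/lam) := by
  have h : ∀ y ∈ Set.uIcc (0:ℝ) t,
      HasDerivAt (fun s => -Real.exp (-s/lam)) ((1/lam) * Real.exp (-y/lam)) y := by
    intro y _
    have h1 : HasDerivAt (fun s : ℝ => -s/lam) (-1/lam) y := by
      simpa using ((hasDerivAt_id y).neg.div_const lam)
    have h2 := h1.exp.neg
    exact HasDerivAt.congr_deriv (f := fun s => -Real.exp (-s/lam)) h2 (by ring)
  have hcont : IntervalIntegrable (fun y => (1/lam) * Real.exp (-y/lam)) volume 0 t := by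
    apply Continuous.intervalIntegrable
    fun_prop
  rw [intervalIntegral.integral_eq_sub_of_hasDerivAt h hcont]
  simp [neg_div]
  ring

lemma sub_int (a B k : ℝ) (ha : 0 < a) (hB : 0 ≤ B) (hk : 0 < k) :
    ∫ y in (0:ℝ)..B, y ^ (a-1) * Real.exp (-(k*y)) = k ^ (-a) * lowerGamma a (k*B) := by
  have hcongr : ∀ y ∈ Set.uIcc (0:ℝ) B,
      y ^ (a-1) * Real.exp (-(k*y))
        = k ^ (-(a-1)) * ((fun t => t ^ (a-1) * Real.exp (-t)) (y * k)) := by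
    intro y hy
    rw [Set.uIcc_of_le hB] at hy
    have hy0 : 0 ≤ y := hy.1
    simp only
    rw [Real.mul_rpow hy0 hk.le, Real.rpow_neg hk.le]
    rw [mul_comm y k]
    field_simp [(Real.rpow_pos_of_pos hk (a-1)).ne']
  rw [intervalIntegral.integral_congr hcongr, intervalIntegral.integral_const_mul,
    intervalIntegral.integral_comp_mul_right (fun t => t ^ (a-1) * Real.exp (-t)) hk.ne']
  have h0 : (0:ℝ) * k = 0 := zero_mul k
  rw [h0]
  have hlg : lowerGamma a (k*B) = ∫ t in (0:ℝ)..(B*k), t ^ (a-1) * Real.exp (-t) := by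
    rw [intervalIntegral.integral_of_le (by positivity), lowerGamma, mul_comm B k]
  rw [← hlg]
  rw [smul_eq_mul, ← mul_assoc]
  congr 1
  rw [← Real.rpow_neg_one k, ← Real.rpow_add hk]
  ring_nf

lemma rpow_int (a B : ℝ) (ha : 0 < a) (hB : 0 ≤ B) :
    ∫ y in (0:ℝ)..B, y ^ (a-1) = B ^ a / a := by
  rw [integral_rpow (Or.inl (by linarith))]
  simp [Real.zero_rpow ha.ne', sub_add_cancel]

lemma expMeasure (lam t : ℝ) (hlam : 0 < lam) (ht : 0 < t) :
    ∫⁻ h in Set.Iic t,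
        ENNReal.ofReal ((Set.Ioi (0:ℝ)).indicator (fun s => (1/lam) * Real.exp (-s/lam)) h)
      = ENNReal.ofReal (1 - Real.exp (-t/lam)) := by
  have heq : ∫⁻ h in Set.Iic t,
        ENNReal.ofReal ((Set.Ioi (0:ℝ)).indicator (fun s => (1/lam) * Real.exp (-s/lam)) h)
      = ∫⁻ h in Set.Iic t,
        (Set.Ioi (0:ℝ)).indicator (fun s => ENNReal.ofReal ((1/lam) * Real.exp (-s/lam))) h := by
    apply lintegral_congr
    intro h
    by_cases hh : h ∈ Set.Ioi (0:ℝ) <;>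
      simp [Set.indicator_of_mem, Set.indicator_of_notMem, hh]
  rw [heq, lintegral_indicator measurableSet_Ioi,
    Measure.restrict_restrict measurableSet_Ioi, Set.Ioi_inter_Iic]
  have hInt : IntegrableOn (fun s => (1/lam) * Real.exp (-s/lam)) (Set.Ioc 0 t) := by
    apply Continuous.integrableOn_Ioc
    fun_prop
  have hNonneg : 0 ≤ᵐ[volume.restrict (Set.Ioc (0:ℝ) t)]
      (fun s => (1/lam) * Real.exp (-s/lam)) :=
    Filter.Eventually.of_forall fun s => by positivity
  rw [← ofReal_integral_eq_lintegral_ofReal hInt hNonneg]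
  congr 1
  rw [← intervalIntegral.integral_of_le ht.le]
  exact exp_int lam t hlam

lemma finalReal (α R₁ lam x : ℝ) (hα : 0 < α) (hR₁ : 0 < R₁) (hlam : 0 < lam) (hx : 0 < x) :
    ∫ y in Set.Ioc (0:ℝ) (R₁ ^ α),
        2/(α*R₁^2) * y^(2/α-1) * (1 - Real.exp (-(x*y)/lam))
      = 1 - 2/(α*R₁^2) * (lam/x)^(2/α) * lowerGamma (2/α) (R₁^α * x / lam) := by
  set a := 2/α with ha_def
  set B := R₁ ^ α with hB_def
  set c := 2/(α*R₁^2) with hc_def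
  set k := x/lam with hk_def
  have ha : 0 < a := by positivity
  have hB : 0 < B := Real.rpow_pos_of_pos hR₁ α
  have hk : 0 < k := by positivity
  have i1 : IntervalIntegrable (fun y : ℝ => y^(a-1)) volume 0 B :=
    intervalIntegral.intervalIntegrable_rpow' (by linarith)
  have i2 : IntervalIntegrable (fun y : ℝ => y^(a-1) * Real.exp (-(k*y))) volume 0 B :=
    i1.mul_continuousOn (Continuous.continuousOn (by fun_prop))
  rw [← intervalIntegral.integral_of_le hB.le]
  have heq : ∀ y ∈ Set.uIcc (0:ℝ) B,
      c*y^(a-1)*(1 - Real.exp (-(x*y)/lam))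
        = c * (y^(a-1) - y^(a-1)*Real.exp (-(k*y))) := by
    intro y _
    have hxy : (-(x*y))/lam = -(k*y) := by
      rw [hk_def]; field_simp
    rw [hxy]; ring
  rw [intervalIntegral.integral_congr heq, intervalIntegral.integral_const_mul,
    intervalIntegral.integral_sub i1 i2, rpow_int a B ha hB.le, sub_int a B k ha hB.le hk]
  have h1 : k*B = B*x/lam := by rw [hk_def]; ring
  have h2 : (lam/x)^a = k^(-a) := by
    rw [show lam/x = k⁻¹ by rw [hk_def]; field_simp, Real.inv_rpow hk.le,
      ← Real.rpow_neg hk.le]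
  have h3 : c * (B^a/a) = 1 := by
    have hBa : B^a = R₁^2 := by
      rw [hB_def, ← Real.rpow_mul hR₁.le]
      have : α * a = 2 := by rw [ha_def]; field_simp
      rw [this]
      norm_num
    rw [hBa, hc_def, ha_def]
    field_simp
  rw [h1, h2, mul_sub, h3]
  ring

/-- If `H ~ Exp(1/λ)` and `D` is independent with density `(2/(α R₁²)) y^(2/α − 1)` on
`[0, R₁^α]`, then the CDF of `g = H/D` satisfies
`F_g(x) = 1 − (2/(α R₁²)) (λ/x)^(2/α) γ(2/α, R₁^α x/λ)` for all `x > 0`. -/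
theorem ratio_cdf_near {Ω : Type*} [MeasurableSpace Ω]
    (ℙ : Measure Ω) [IsProbabilityMeasure ℙ]
    (R₁ α lam : ℝ) (hR₁ : 0 < R₁) (hα : 0 < α) (hlam : 0 < lam)
    (H D : Ω → ℝ) (hH : Measurable H) (hD : Measurable D)
    (hindep : ProbabilityTheory.IndepFun H D ℙ)
    (hHpdf : Measure.map H ℙ =
      (volume : Measure ℝ).withDensity (fun h =>
        ENNReal.ofReal (Set.indicator (Set.Ioi 0)
          (fun t => (1 / lam) * Real.exp (-t / lam)) h)))
    (hDpdf : Measure.map D ℙ =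
      (volume : Measure ℝ).withDensity (fun y =>
        ENNReal.ofReal (Set.indicator (Set.Icc 0 (R₁ ^ α))
          (fun z => 2 / (α * R₁ ^ 2) * z ^ (2 / α - 1)) y))) :
    ∀ x : ℝ, 0 < x →
      ℙ {ω | H ω / D ω ≤ x} =
        ENNReal.ofReal (1 - 2 / (α * R₁ ^ 2) * (lam / x) ^ (2 / α) *
          lowerGamma (2 / α) (R₁ ^ α * x / lam)) := by
  intro x hx
  have hB : (0:ℝ) < R₁ ^ α := Real.rpow_pos_of_pos hR₁ α
  haveI : IsProbabilityMeasure (Measure.map H ℙ) := Measure.isProbabilityMeasure_map hH.aemeasurable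
  haveI : IsProbabilityMeasure (Measure.map D ℙ) := Measure.isProbabilityMeasure_map hD.aemeasurable
  have hS : MeasurableSet {p : ℝ × ℝ | p.1 / p.2 ≤ x} :=
    measurableSet_le (measurable_fst.div measurable_snd) measurable_const
  have hmap := (ProbabilityTheory.indepFun_iff_map_prod_eq_prod_map_map
    hH.aemeasurable hD.aemeasurable).mp hindep
  have h1 : ℙ {ω | H ω / D ω ≤ x}
      = (Measure.map (fun ω => (H ω, D ω)) ℙ) {p : ℝ × ℝ | p.1 / p.2 ≤ x} := by
    rw [Measure.map_apply (hH.prodMk hD) hS]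
    rfl
  have hfmeas : Measurable (fun y : ℝ =>
      ENNReal.ofReal (Set.indicator (Set.Icc 0 (R₁ ^ α))
        (fun z => 2 / (α * R₁ ^ 2) * z ^ (2 / α - 1)) y)) := by
    apply Measurable.ennreal_ofReal
    apply Measurable.indicator _ measurableSet_Icc
    fun_prop
  rw [h1, hmap, Measure.prod_apply_symm hS, hDpdf,
    lintegral_withDensity_eq_lintegral_mul_non_measurable _ hfmeas
      (Filter.Eventually.of_forall fun y => ENNReal.ofReal_lt_top)]
  have hae : (fun y : ℝ =>
        ((fun y => ENNReal.ofReal (Set.indicator (Set.Icc 0 (R₁ ^ α))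
          (fun z => 2 / (α * R₁ ^ 2) * z ^ (2 / α - 1)) y)) *
         (fun y => (Measure.map H ℙ) ((fun h => (h, y)) ⁻¹' {p : ℝ × ℝ | p.1 / p.2 ≤ x}))) y)
      =ᵐ[volume]
      (Set.Ioc (0:ℝ) (R₁ ^ α)).indicator (fun y =>
        ENNReal.ofReal (2 / (α * R₁ ^ 2) * y ^ (2 / α - 1) *
          (1 - Real.exp (-(x*y)/lam)))) := by
    filter_upwards [compl_mem_ae_iff.mpr (measure_singleton (0:ℝ))] with y hy
    simp only [Set.mem_compl_iff, Set.mem_singleton_iff] at hy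
    simp only [Pi.mul_apply]
    by_cases hyI : y ∈ Set.Ioc (0:ℝ) (R₁ ^ α)
    · rw [Set.indicator_of_mem hyI]
      have hy0 : 0 < y := hyI.1
      rw [Set.indicator_of_mem (Set.mem_Icc.mpr ⟨hy0.le, hyI.2⟩)]
      have hpre : (fun h : ℝ => (h, y)) ⁻¹' {p : ℝ × ℝ | p.1 / p.2 ≤ x}
          = Set.Iic (x * y) := by
        ext h
        simp only [Set.mem_preimage, Set.mem_setOf_eq, Set.mem_Iic]
        rw [div_le_iff₀ hy0]
      rw [hpre, hHpdf, withDensity_apply _ measurableSet_Iic,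
        expMeasure lam (x*y) hlam (by positivity)]
      rw [← ENNReal.ofReal_mul (by positivity)]
    · rw [Set.indicator_of_notMem hyI]
      have hyI' : y ∉ Set.Icc (0:ℝ) (R₁ ^ α) := by
        intro hmem
        exact hyI ⟨lt_of_le_of_ne hmem.1 (Ne.symm hy), hmem.2⟩
      rw [Set.indicator_of_notMem hyI']
      simp
  rw [lintegral_congr_ae hae, lintegral_indicator measurableSet_Ioc]
  have hInt : IntegrableOn (fun y : ℝ =>
      2 / (α * R₁ ^ 2) * y ^ (2 / α - 1) * (1 - Real.exp (-(x*y)/lam)))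
      (Set.Ioc (0:ℝ) (R₁ ^ α)) := by
    have hbase : IntegrableOn (fun y : ℝ => 2 / (α * R₁ ^ 2) * y ^ (2 / α - 1))
        (Set.Ioc (0:ℝ) (R₁ ^ α)) :=
      ((intervalIntegral.intervalIntegrable_rpow' (by
        have : (0:ℝ) < 2 / α := by positivity
        linarith)).1 : IntegrableOn (fun y : ℝ => y ^ (2/α - 1)) _ _).const_mul _
    have hm : AEStronglyMeasurable (fun y : ℝ =>
        2 / (α * R₁ ^ 2) * y ^ (2 / α - 1) * (1 - Real.exp (-(x*y)/lam)))
        (volume.restrict (Set.Ioc (0:ℝ) (R₁ ^ α))) := by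
      apply ContinuousOn.aestronglyMeasurable _ measurableSet_Ioc
      apply ContinuousOn.mul
      · exact continuousOn_const.mul
          (ContinuousOn.rpow_const continuousOn_id (fun y hy => Or.inl hy.1.ne'))
      · exact Continuous.continuousOn (by fun_prop)
    apply hbase.mono' hm
    filter_upwards [ae_restrict_mem measurableSet_Ioc] with y hyI
    have hy0 : 0 < y := hyI.1
    have he1 : Real.exp (-(x*y)/lam) ≤ 1 := by
      rw [Real.exp_le_one_iff]
      have : 0 ≤ x * y := by positivity
      rw [neg_div]
      exact neg_nonpos.mpr (by positivity)
    have he0 : 0 < Real.exp (-(x*y)/lam) := Real.exp_pos _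
    have hr : (0:ℝ) ≤ y ^ (2/α - 1) := (Real.rpow_pos_of_pos hy0 _).le
    have hc0 : (0:ℝ) < 2 / (α * R₁ ^ 2) := by positivity
    have hnn : (0:ℝ) ≤ 2 / (α * R₁ ^ 2) * y ^ (2 / α - 1) * (1 - Real.exp (-(x*y)/lam)) :=
      mul_nonneg (mul_nonneg hc0.le hr) (by linarith)
    rw [Real.norm_eq_abs, abs_of_nonneg hnn]
    exact mul_le_of_le_one_right (mul_nonneg hc0.le hr) (by linarith)
  have hNonneg : 0 ≤ᵐ[volume.restrict (Set.Ioc (0:ℝ) (R₁ ^ α))]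
      (fun y : ℝ => 2 / (α * R₁ ^ 2) * y ^ (2 / α - 1) * (1 - Real.exp (-(x*y)/lam))) := by
    filter_upwards [ae_restrict_mem measurableSet_Ioc] with y hyI
    have hy0 : 0 < y := hyI.1
    have he1 : Real.exp (-(x*y)/lam) ≤ 1 := by
      rw [Real.exp_le_one_iff]
      rw [neg_div]
      exact neg_nonpos.mpr (by positivity)
    have hr : (0:ℝ) ≤ y ^ (2/α - 1) := (Real.rpow_pos_of_pos hy0 _).le
    have hc0 : (0:ℝ) < 2 / (α * R₁ ^ 2) := by positivity
    exact mul_nonneg (mul_nonneg hc0.le hr) (by linarith)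
  rw [← ofReal_integral_eq_lintegral_ofReal hInt hNonneg]
  congr 1
  exact finalReal α R₁ lam x hα hR₁ hlam hx
end

section
/- Let H be exponential with mean λ and D be independent with density f_D(y) = (2/(α(R₂² − R₁²))) y^{2/α − 1} on [R₁^α, R₂^α]. Then the CDF of g = H/D satisfies F_g(x) = 1 − (2/(α(R₂² − R₁²))) (λ/x)^{2/α} [γ(2/α, R₂^α x/λ) − γ(2/α, R₁^α x/λ)] for x > 0. -/
open MeasureTheory

-- integrability of gamma integrand on Ioc 0 b
lemma gammaIntegrand_integrable {p b : ℝ} (hp : 0 < p) :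
    IntegrableOn (fun t : ℝ => t ^ (p - 1) * Real.exp (-t)) (Set.Ioc 0 b) := by
  have h := Real.GammaIntegral_convergent hp
  have h2 : IntegrableOn (fun t : ℝ => t ^ (p - 1) * Real.exp (-t)) (Set.Ioi 0) := by
    simpa [mul_comm] using h
  exact h2.mono_set Set.Ioc_subset_Ioi_self

lemma lowerGamma_aux {p : ℝ} (hp : 0 < p) {a b : ℝ} (ha : 0 ≤ a) (hab : a ≤ b) :
    (∫ t in Set.Ioc (0:ℝ) b, t ^ (p - 1) * Real.exp (-t)) -
    (∫ t in Set.Ioc (0:ℝ) a, t ^ (p - 1) * Real.exp (-t)) =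
    ∫ t in a..b, t ^ (p - 1) * Real.exp (-t) := by
  have hIb : IntervalIntegrable (fun t : ℝ => t ^ (p - 1) * Real.exp (-t)) volume 0 b :=
    (intervalIntegrable_iff_integrableOn_Ioc_of_le (ha.trans hab)).mpr (gammaIntegrand_integrable hp)
  have hIa : IntervalIntegrable (fun t : ℝ => t ^ (p - 1) * Real.exp (-t)) volume 0 a :=
    (intervalIntegrable_iff_integrableOn_Ioc_of_le ha).mpr (gammaIntegrand_integrable hp)
  rw [← intervalIntegral.integral_of_le (ha.trans hab), ← intervalIntegral.integral_of_le ha,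
    intervalIntegral.integral_interval_sub_left hIb hIa]

-- substitution lemma
lemma subst_aux {p k a b : ℝ} (hk : 0 < k) (ha : 0 < a) (hab : a ≤ b) :
    ∫ y in a..b, y ^ (p - 1) * Real.exp (-(y * k)) =
      k ^ (-p) * ∫ t in a * k..b * k, t ^ (p - 1) * Real.exp (-t) := by
  have h := intervalIntegral.integral_comp_mul_right
    (a := a) (b := b) (fun t : ℝ => t ^ (p - 1) * Real.exp (-t)) hk.ne'
  have h2 : ∀ y ∈ Set.uIcc a b, (y * k) ^ (p - 1) * Real.exp (-(y * k)) =
      k ^ (p - 1) * (y ^ (p - 1) * Real.exp (-(y * k))) := by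
    intro y hy
    have hy0 : 0 ≤ y := le_trans ha.le (by rw [Set.uIcc_of_le hab] at hy; exact hy.1)
    rw [Real.mul_rpow hy0 hk.le]; ring
  rw [intervalIntegral.integral_congr h2] at h
  rw [intervalIntegral.integral_const_mul] at h
  have hkp : k ^ (p - 1) ≠ 0 := by positivity
  field_simp at h ⊢
  rw [Real.rpow_neg hk.le]
  rw [eq_comm, inv_mul_eq_iff_eq_mul₀ (by positivity)]
  have hJ : (∫ x in a..b, x ^ (p - 1) * Real.exp (-(x * k))) =
      ∫ y in a..b, y ^ (p - 1) * Real.exp (-(k * y)) :=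
    intervalIntegral.integral_congr (fun y _ => by simp only [mul_comm y k])
  rw [hJ, smul_eq_mul, Real.rpow_sub_one hk.ne'] at h
  have hk' : k ≠ 0 := hk.ne'
  calc _ = k * ((1 / k) * ∫ t in k * a..k * b, t ^ (p - 1) * Real.exp (-t)) := by
        rw [← mul_assoc, mul_one_div_cancel hk', one_mul]
    _ = k ^ p * ∫ y in a..b, y ^ (p - 1) * Real.exp (-(k * y)) := by
        rw [← h]; field_simp

lemma exp_integral {lam s : ℝ} (hlam : 0 < lam) (hs : 0 ≤ s) :
    ∫ h in Set.Ioc (0:ℝ) s, (1 / lam) * Real.exp (-h / lam) = 1 - Real.exp (-s / lam) := by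
  rw [← intervalIntegral.integral_of_le hs, intervalIntegral.integral_const_mul]
  have h3 : ∀ h : ℝ, Real.exp (-h / lam) = Real.exp (h * (-1/lam)) := by
    intro h; congr 1; field_simp
  simp_rw [h3]
  rw [intervalIntegral.integral_comp_mul_right (fun t => Real.exp t) (by positivity : (-1/lam) ≠ 0)]
  rw [integral_exp]
  field_simp
  rw [smul_eq_mul, zero_div, neg_zero, Real.exp_zero]; ring


lemma expCDF {lam : ℝ} (hlam : 0 < lam) {s : ℝ} (hs : 0 ≤ s) :
    (volume.withDensity (fun h =>
        ENNReal.ofReal (Set.indicator (Set.Ioi 0)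
          (fun t => (1 / lam) * Real.exp (-t / lam)) h))) (Set.Iic s) =
      ENNReal.ofReal (1 - Real.exp (-s / lam)) := by
  rw [withDensity_apply _ measurableSet_Iic]
  have hind : ∀ h : ℝ, ENNReal.ofReal (Set.indicator (Set.Ioi 0)
      (fun t => (1 / lam) * Real.exp (-t / lam)) h) =
      Set.indicator (Set.Ioi 0) (fun t => ENNReal.ofReal ((1 / lam) * Real.exp (-t / lam))) h := by
    intro h
    by_cases hh : h ∈ Set.Ioi (0:ℝ) <;> simp [hh]
  simp_rw [hind]
  rw [lintegral_indicator measurableSet_Ioi _, Measure.restrict_restrict measurableSet_Ioi,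
    Set.Ioi_inter_Iic]
  rw [← ofReal_integral_eq_lintegral_ofReal]
  · rw [exp_integral hlam hs]
  · apply Continuous.integrableOn_Ioc
    continuity
  · filter_upwards with h
    positivity

lemma real_main {R₁ R₂ α lam x : ℝ} (hR₁ : 0 < R₁) (hR : R₁ < R₂) (hα : 0 < α)
    (hlam : 0 < lam) (hx : 0 < x) :
    ∫ y in Set.Icc (R₁ ^ α) (R₂ ^ α),
      (2 / (α * (R₂ ^ 2 - R₁ ^ 2)) * y ^ (2 / α - 1)) * (1 - Real.exp (-(x * y) / lam)) =
    1 - 2 / (α * (R₂ ^ 2 - R₁ ^ 2)) * (lam / x) ^ (2 / α) *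
      (lowerGamma (2 / α) (R₂ ^ α * x / lam) - lowerGamma (2 / α) (R₁ ^ α * x / lam)) := by
  set p : ℝ := 2 / α with hp
  set a : ℝ := R₁ ^ α with hadef
  set b : ℝ := R₂ ^ α with hbdef
  have hp0 : 0 < p := by positivity
  have ha0 : 0 < a := Real.rpow_pos_of_pos hR₁ α
  have hb0 : 0 < b := Real.rpow_pos_of_pos (hR₁.trans hR) α
  have hab : a ≤ b := Real.rpow_le_rpow hR₁.le hR.le hα.le
  have hΔ : (0:ℝ) < R₂ ^ 2 - R₁ ^ 2 := by
    have := pow_lt_pow_left₀ hR hR₁.le (two_ne_zero)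
    linarith
  set cd : ℝ := 2 / (α * (R₂ ^ 2 - R₁ ^ 2)) with hcd
  have hcd0 : 0 < cd := by positivity
  set k : ℝ := x / lam with hk
  have hk0 : 0 < k := by positivity
  -- convert to interval integral
  rw [MeasureTheory.integral_Icc_eq_integral_Ioc, ← intervalIntegral.integral_of_le hab]
  -- continuity facts
  have hcont1 : ContinuousOn (fun y : ℝ => y ^ (p - 1)) (Set.uIcc a b) := by
    intro y hy
    rw [Set.uIcc_of_le hab] at hy
    have hy0 : y ≠ 0 := (ha0.trans_le hy.1).ne'
    exact (Real.continuousAt_rpow_const y (p-1) (Or.inl hy0)).continuousWithinAt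
  have hcont2 : ContinuousOn (fun y : ℝ => Real.exp (-(x * y) / lam)) (Set.uIcc a b) :=
    (Real.continuous_exp.comp (by continuity)).continuousOn
  have hI1 : IntervalIntegrable (fun y : ℝ => cd * y ^ (p - 1)) volume a b :=
    ((continuousOn_const.mul hcont1)).intervalIntegrable
  have hI2 : IntervalIntegrable
      (fun y : ℝ => cd * y ^ (p - 1) * Real.exp (-(x * y) / lam)) volume a b :=
    ((continuousOn_const.mul hcont1).mul hcont2).intervalIntegrable
  have hsplit : ∀ y : ℝ, cd * y ^ (p - 1) * (1 - Real.exp (-(x * y) / lam)) =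
      cd * y ^ (p - 1) - cd * y ^ (p - 1) * Real.exp (-(x * y) / lam) := fun y => by ring
  simp_rw [hsplit]
  rw [intervalIntegral.integral_sub hI1 hI2]
  -- first integral
  have key : ∀ R : ℝ, 0 < R → (R ^ α) ^ (2 / α) = R ^ 2 := by
    intro R hRp
    rw [← Real.rpow_mul hRp.le]
    have h2 : α * (2 / α) = 2 := by field_simp
    rw [h2, show ((2:ℝ)) = ((2:ℕ):ℝ) by norm_num, Real.rpow_natCast]
  have hfirst : ∫ y in a..b, cd * y ^ (p - 1) = 1 := by
    rw [intervalIntegral.integral_const_mul, integral_rpow (Or.inl (by linarith : (-1:ℝ) < p - 1))]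
    rw [sub_add_cancel, hbdef, hadef, hp, key R₂ (hR₁.trans hR), key R₁ hR₁, hcd]
    field_simp
  rw [hfirst]
  -- second integral
  have hexp : ∀ y ∈ Set.uIcc a b, cd * y ^ (p - 1) * Real.exp (-(x * y) / lam) =
      cd * (y ^ (p - 1) * Real.exp (-(y * k))) := by
    intro y _
    have : -(x * y) / lam = -(y * k) := by rw [hk]; ring
    rw [this]; ring
  rw [intervalIntegral.integral_congr hexp, intervalIntegral.integral_const_mul,
    subst_aux hk0 ha0 hab]
  -- gamma difference
  have hga : lowerGamma p (b * x / lam) - lowerGamma p (a * x / lam) =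
      ∫ t in a * k..b * k, t ^ (p - 1) * Real.exp (-t) := by
    unfold lowerGamma
    have h1 : a * k = a * x / lam := by rw [hk]; ring
    have h2 : b * k = b * x / lam := by rw [hk]; ring
    rw [h1, h2]
    exact lowerGamma_aux hp0 (by positivity) (by
      have : a * x / lam ≤ b * x / lam := by gcongr
      linarith)
  rw [← hga]
  have hkp : k ^ (-p) = (lam / x) ^ p := by
    rw [Real.rpow_neg hk0.le, ← Real.inv_rpow hk0.le, hk, inv_div]
  rw [hkp]
  ring

set_option maxHeartbeats 1000000 in
/-- If `H ~ Exp(1/λ)` and `D` is independent with density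
`(2/(α(R₂² − R₁²))) y^(2/α − 1)` on `[R₁^α, R₂^α]`, then the CDF of `g = H/D` satisfies
`F_g(x) = 1 − (2/(α(R₂² − R₁²))) (λ/x)^(2/α) [γ(2/α, R₂^α x/λ) − γ(2/α, R₁^α x/λ)]`
for `x > 0`. -/
theorem ratio_cdf_far {Ω : Type*} [MeasurableSpace Ω]
    (ℙ : Measure Ω) [IsProbabilityMeasure ℙ]
    (R₁ R₂ α lam : ℝ) (hR₁ : 0 < R₁) (hR : R₁ < R₂) (hα : 0 < α) (hlam : 0 < lam)
    (H D : Ω → ℝ) (hH : Measurable H) (hD : Measurable D)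
    (hindep : ProbabilityTheory.IndepFun H D ℙ)
    (hHpdf : Measure.map H ℙ =
      (volume : Measure ℝ).withDensity (fun h =>
        ENNReal.ofReal (Set.indicator (Set.Ioi 0)
          (fun t => (1 / lam) * Real.exp (-t / lam)) h)))
    (hDpdf : Measure.map D ℙ =
      (volume : Measure ℝ).withDensity (fun y =>
        ENNReal.ofReal (Set.indicator (Set.Icc (R₁ ^ α) (R₂ ^ α))
          (fun z => 2 / (α * (R₂ ^ 2 - R₁ ^ 2)) * z ^ (2 / α - 1)) y))) :
    ∀ x : ℝ, 0 < x →
      ℙ {ω | H ω / D ω ≤ x} =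
        ENNReal.ofReal (1 - 2 / (α * (R₂ ^ 2 - R₁ ^ 2)) * (lam / x) ^ (2 / α) *
          (lowerGamma (2 / α) (R₂ ^ α * x / lam) -
            lowerGamma (2 / α) (R₁ ^ α * x / lam))) := by
  intro x hx
  have hΔ : (0:ℝ) < R₂ ^ 2 - R₁ ^ 2 := by
    have := pow_lt_pow_left₀ hR hR₁.le (two_ne_zero); linarith
  have ha0 : (0:ℝ) < R₁ ^ α := Real.rpow_pos_of_pos hR₁ α
  set cd : ℝ := 2 / (α * (R₂ ^ 2 - R₁ ^ 2)) with hcd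
  have hcd0 : 0 < cd := by positivity
  set s : Set (ℝ × ℝ) := {p : ℝ × ℝ | p.1 / p.2 ≤ x} with hsdef
  have hset : MeasurableSet s :=
    measurableSet_le (measurable_fst.div measurable_snd) measurable_const
  have h1 : ℙ {ω | H ω / D ω ≤ x} = (Measure.map (fun ω => (H ω, D ω)) ℙ) s :=
    (Measure.map_apply (hH.prodMk hD) hset).symm
  rw [(ProbabilityTheory.indepFun_iff_map_prod_eq_prod_map_map hH.aemeasurable
    hD.aemeasurable).mp hindep, hHpdf, hDpdf, Measure.prod_apply_symm hset] at h1
  set μH := (volume : Measure ℝ).withDensity (fun h =>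
      ENNReal.ofReal (Set.indicator (Set.Ioi 0)
        (fun t => (1 / lam) * Real.exp (-t / lam)) h)) with hμH
  have hfmeas : Measurable (fun y : ℝ =>
      ENNReal.ofReal (Set.indicator (Set.Icc (R₁ ^ α) (R₂ ^ α))
        (fun z => cd * z ^ (2 / α - 1)) y)) := by
    apply Measurable.ennreal_ofReal
    apply Measurable.indicator _ measurableSet_Icc
    measurability
  have hgmeas : Measurable (fun y : ℝ => μH ((fun h => (h, y)) ⁻¹' s)) :=
    measurable_measure_prodMk_right hset
  rw [lintegral_withDensity_eq_lintegral_mul volume hfmeas hgmeas] at h1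
  simp only [Pi.mul_apply] at h1
  have hpt : ∀ y : ℝ, ENNReal.ofReal (Set.indicator (Set.Icc (R₁ ^ α) (R₂ ^ α))
        (fun z => cd * z ^ (2 / α - 1)) y) * μH ((fun h => (h, y)) ⁻¹' s) =
      Set.indicator (Set.Icc (R₁ ^ α) (R₂ ^ α))
        (fun y => ENNReal.ofReal (cd * y ^ (2 / α - 1)) * μH ((fun h => (h, y)) ⁻¹' s)) y := by
    intro y
    by_cases hy : y ∈ Set.Icc (R₁ ^ α) (R₂ ^ α) <;>
      simp [Set.indicator_of_mem, Set.indicator_of_notMem, hy]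
  simp_rw [hpt] at h1
  rw [lintegral_indicator measurableSet_Icc] at h1
  rw [setLIntegral_congr_fun measurableSet_Icc
    (fun ⦃y⦄ (hy : y ∈ Set.Icc (R₁ ^ α) (R₂ ^ α)) => ?_)] at h1
  rotate_left
  · exact fun y => ENNReal.ofReal ((cd * y ^ (2 / α - 1)) * (1 - Real.exp (-(x * y) / lam)))
  · have hy0 : 0 < y := lt_of_lt_of_le ha0 hy.1
    have hpre : (fun h => (h, y)) ⁻¹' s = Set.Iic (x * y) := by
      ext h
      simp only [hsdef, Set.mem_preimage, Set.mem_setOf_eq, Set.mem_Iic]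
      rw [div_le_iff₀ hy0, mul_comm]
    rw [hpre, hμH, expCDF hlam (by positivity : (0:ℝ) ≤ x * y)]
    rw [← ENNReal.ofReal_mul (by positivity)]
  rw [← ofReal_integral_eq_lintegral_ofReal ?hint ?hnn] at h1
  case hint =>
    apply ContinuousOn.integrableOn_compact isCompact_Icc
    apply ContinuousOn.mul
    · apply ContinuousOn.mul continuousOn_const
      intro y hy
      have hy0 : y ≠ 0 := (lt_of_lt_of_le ha0 hy.1).ne'
      exact (Real.continuousAt_rpow_const y _ (Or.inl hy0)).continuousWithinAt
    · exact continuousOn_const.sub (Real.continuous_exp.comp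
        (((continuous_const.mul continuous_id).neg).div_const lam)).continuousOn
  case hnn =>
    apply (ae_restrict_iff' measurableSet_Icc).mpr
    apply ae_of_all
    intro y hy
    have hy0 : 0 < y := lt_of_lt_of_le ha0 hy.1
    have h1 : (0:ℝ) ≤ cd * y ^ (2 / α - 1) := by positivity
    have h2 : Real.exp (-(x * y) / lam) ≤ 1 := by
      rw [Real.exp_le_one_iff]
      have : 0 ≤ x * y := by positivity
      apply div_nonpos_of_nonpos_of_nonneg <;> [linarith; exact hlam.le]
    have : (0:ℝ) ≤ 1 - Real.exp (-(x * y) / lam) := by linarith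
    positivity
  rw [real_main hR₁ hR hα hlam hx] at h1
  exact h1
end

section
/- For real t > 0, α > 0, β > 0, δ > 0, the integral M(t, α, β, δ) := ∫₀^t x^{α−1} γ(β, δx) dx equals (t^{α+β} δ^β / β) · B(1, α+β) · ₂F₂(β, α+β; β+1, α+β+1; −tδ), where B is the Beta function and ₂F₂ the generalized hypergeometric function. -/
open MeasureTheory Real Set


/-- The Pochhammer symbol (rising factorial) `(x)_k = x(x+1)⋯(x+k−1)`. -/
noncomputable def poch (x : ℝ) (k : ℕ) : ℝ := ∏ i ∈ Finset.range k, (x + i)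

/-- The generalized hypergeometric function `₂F₂(a₁,a₂;b₁,b₂;z)`. -/
noncomputable def F22 (a₁ a₂ b₁ b₂ z : ℝ) : ℝ :=
  ∑' k : ℕ, poch a₁ k * poch a₂ k / (poch b₁ k * poch b₂ k * (k.factorial : ℝ)) * z ^ k

lemma int_rpow {y c : ℝ} (hy : 0 ≤ y) (hc : -1 < c) :
    ∫ s in Set.Ioc (0:ℝ) y, s ^ c = y ^ (c + 1) / (c + 1) := by
  rw [← intervalIntegral.integral_of_le hy, integral_rpow (Or.inl hc),
    Real.zero_rpow (by linarith), sub_zero]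

lemma integrableOn_rpow {y c : ℝ} (hy : 0 ≤ y) (hc : -1 < c) :
    IntegrableOn (fun s : ℝ => s ^ c) (Set.Ioc (0:ℝ) y) := by
  have := intervalIntegral.intervalIntegrable_rpow' (a := 0) (b := y) hc
  rwa [intervalIntegrable_iff, uIoc_of_le hy] at this

lemma poch_pos {x : ℝ} (hx : 0 < x) (k : ℕ) : 0 < poch x k :=
  Finset.prod_pos fun i _ => by positivity

lemma poch_mul_add {x : ℝ} (k : ℕ) : poch x k * (x + k) = x * poch (x + 1) k := by
  induction k with
  | zero => simp [poch]
  | succ n ih =>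
    have h1 : poch x (n+1) = poch x n * (x + n) := Finset.prod_range_succ _ n
    have h2 : poch (x+1) (n+1) = poch (x+1) n * (x + 1 + n) := Finset.prod_range_succ _ n
    rw [h1, h2]
    push_cast
    linear_combination (x + n + 1) * ih

/-- Power series expansion of the lower incomplete gamma function. -/
lemma lowerGamma_eq_tsum {β y : ℝ} (hβ : 0 < β) (hy : 0 < y) :
    lowerGamma β y = ∑' k : ℕ, (-1) ^ k * y ^ (β + k) / (k.factorial * (β + k)) := by
  have hc : ∀ k : ℕ, (-1:ℝ) < β - 1 + (k:ℝ) := fun k => by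
    have : (0:ℝ) ≤ k := Nat.cast_nonneg k
    linarith
  have hpt : ∀ k : ℕ, ∀ s ∈ Set.Ioc (0:ℝ) y,
      s ^ (β - 1) * ((-s) ^ k / k.factorial) = ((-1)^k / k.factorial) * s ^ (β - 1 + (k:ℝ)) := by
    intro k s hs
    rw [Real.rpow_add hs.1, Real.rpow_natCast, neg_pow]
    ring
  have key : ∀ k : ℕ, ∫ s in Set.Ioc (0:ℝ) y, s ^ (β - 1) * ((-s) ^ k / k.factorial)
      = (-1) ^ k * y ^ (β + k) / (k.factorial * (β + k)) := by
    intro k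
    rw [setIntegral_congr_fun measurableSet_Ioc (hpt k), integral_const_mul,
      int_rpow hy.le (hc k)]
    have h2 : β - 1 + (k:ℝ) + 1 = β + k := by ring
    rw [h2]; field_simp
  have hint : ∀ k : ℕ, IntegrableOn
      (fun s : ℝ => s ^ (β - 1) * ((-s) ^ k / k.factorial)) (Set.Ioc (0:ℝ) y) := by
    intro k
    have h : IntegrableOn (fun s : ℝ => ((-1:ℝ)^k / k.factorial) * s ^ (β - 1 + (k:ℝ)))
        (Set.Ioc (0:ℝ) y) := (integrableOn_rpow hy.le (hc k)).const_mul _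
    exact h.congr_fun (fun s hs => (hpt k s hs).symm) measurableSet_Ioc
  have hnorm : ∀ k : ℕ, (∫ s in Set.Ioc (0:ℝ) y, ‖s ^ (β - 1) * ((-s) ^ k / k.factorial)‖)
      = y ^ (β + k) / (k.factorial * (β + k)) := by
    intro k
    have : ∀ s ∈ Set.Ioc (0:ℝ) y, ‖s ^ (β - 1) * ((-s) ^ k / k.factorial)‖
        = ((1:ℝ) / k.factorial) * s ^ (β - 1 + (k:ℝ)) := by
      intro s hs
      rw [hpt k s hs, norm_mul, norm_div, norm_pow, norm_neg, norm_one, one_pow,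
        Real.norm_of_nonneg (Real.rpow_nonneg hs.1.le _),
        Real.norm_of_nonneg (by positivity : (0:ℝ) ≤ (k.factorial:ℝ))]
    rw [setIntegral_congr_fun measurableSet_Ioc this, integral_const_mul, int_rpow hy.le (hc k)]
    have h2 : β - 1 + (k:ℝ) + 1 = β + k := by ring
    rw [h2]; field_simp
  have hsummable : Summable (fun k : ℕ => ∫ s in Set.Ioc (0:ℝ) y,
      ‖s ^ (β - 1) * ((-s) ^ k / k.factorial)‖) := by
    apply Summable.of_nonneg_of_le
      (fun k => by rw [hnorm k]; positivity)
      (fun k => ?_) ((Real.summable_pow_div_factorial y).mul_left (y ^ β / β))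
    rw [hnorm k]
    have hfk : (0:ℝ) < k.factorial := by positivity
    have hbk : (0:ℝ) < β + k := by have : (0:ℝ) ≤ k := Nat.cast_nonneg k; linarith
    have h1 : y ^ (β + (k:ℝ)) = y ^ β * y ^ k := by
      rw [Real.rpow_add hy, Real.rpow_natCast]
    rw [h1, div_le_iff₀ (by positivity)]
    have h3 : y ^ β / β * (y ^ k / k.factorial) * (k.factorial * (β + k))
        = y ^ β * y ^ k * ((β + k)/β) := by field_simp
    rw [h3]
    have h2 : (1:ℝ) ≤ (β + k)/β := by
      rw [le_div_iff₀ hβ]; have : (0:ℝ) ≤ k := Nat.cast_nonneg k; linarith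
    nlinarith [mul_nonneg (Real.rpow_nonneg hy.le β) (pow_nonneg hy.le k)]
  have swap := integral_tsum_of_summable_integral_norm hint hsummable
  have hexp : ∀ s ∈ Set.Ioc (0:ℝ) y,
      s ^ (β - 1) * Real.exp (-s) = ∑' k : ℕ, s ^ (β - 1) * ((-s) ^ k / k.factorial) := by
    intro s _
    rw [tsum_mul_left]
    congr 1
    rw [Real.exp_eq_exp_ℝ, NormedSpace.exp_eq_tsum_div]
  rw [lowerGamma, setIntegral_congr_fun measurableSet_Ioc hexp, ← swap]
  exact tsum_congr key

/-- `M(t,α,β,δ) := ∫₀ᵗ x^(α−1) γ(β, δx) dx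
  = (t^(α+β) δ^β / β) B(1, α+β) ₂F₂(β, α+β; β+1, α+β+1; −tδ)`,
where `B(1, α+β) = 1/(α+β)`. -/
theorem integral_rpow_mul_lowerGamma (t α β δ : ℝ)
    (ht : 0 < t) (hα : 0 < α) (hβ : 0 < β) (hδ : 0 < δ) :
    ∫ x in Set.Ioc (0 : ℝ) t, x ^ (α - 1) * lowerGamma β (δ * x) =
      (t ^ (α + β) * δ ^ β / β) * (1 / (α + β)) *
        F22 β (α + β) (β + 1) (α + β + 1) (-(t * δ)) := by
  have hc : ∀ k : ℕ, (-1:ℝ) < α - 1 + (β + (k:ℝ)) := fun k => by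
    have : (0:ℝ) ≤ k := Nat.cast_nonneg k; linarith
  have hbk : ∀ k : ℕ, (0:ℝ) < β + k := fun k => by
    have : (0:ℝ) ≤ k := Nat.cast_nonneg k; linarith
  have habk : ∀ k : ℕ, (0:ℝ) < α + β + k := fun k => by
    have : (0:ℝ) ≤ k := Nat.cast_nonneg k; linarith
  set f : ℕ → ℝ → ℝ := fun k x =>
    x ^ (α - 1) * ((-1) ^ k * (δ * x) ^ (β + (k:ℝ)) / (k.factorial * (β + k))) with hf
  have hpt : ∀ k : ℕ, ∀ x ∈ Set.Ioc (0:ℝ) t,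
      f k x = ((-1)^k * δ ^ (β + (k:ℝ)) / (k.factorial * (β + k))) * x ^ (α - 1 + (β + (k:ℝ))) := by
    intro k x hx
    rw [hf]
    simp only
    rw [Real.mul_rpow hδ.le hx.1.le, Real.rpow_add hx.1 (α - 1)]
    ring
  have key : ∀ k : ℕ, ∫ x in Set.Ioc (0:ℝ) t, f k x
      = (-1)^k * δ ^ (β + (k:ℝ)) * t ^ (α + β + (k:ℝ)) / (k.factorial * (β + k) * (α + β + k)) := by
    intro k
    rw [setIntegral_congr_fun measurableSet_Ioc (hpt k), integral_const_mul,
      int_rpow ht.le (hc k)]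
    have h2 : α - 1 + (β + (k:ℝ)) + 1 = α + β + k := by ring
    rw [h2]
    field_simp
  have hint : ∀ k : ℕ, IntegrableOn (f k) (Set.Ioc (0:ℝ) t) := by
    intro k
    have h : IntegrableOn
        (fun x : ℝ => ((-1)^k * δ ^ (β + (k:ℝ)) / (k.factorial * (β + k))) * x ^ (α - 1 + (β + (k:ℝ))))
        (Set.Ioc (0:ℝ) t) := (integrableOn_rpow ht.le (hc k)).const_mul _
    exact h.congr_fun (fun x hx => (hpt k x hx).symm) measurableSet_Ioc
  have hnorm : ∀ k : ℕ, (∫ x in Set.Ioc (0:ℝ) t, ‖f k x‖)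
      = δ ^ (β + (k:ℝ)) * t ^ (α + β + (k:ℝ)) / (k.factorial * (β + k) * (α + β + k)) := by
    intro k
    have heq : ∀ x ∈ Set.Ioc (0:ℝ) t, ‖f k x‖
        = (δ ^ (β + (k:ℝ)) / (k.factorial * (β + k))) * x ^ (α - 1 + (β + (k:ℝ))) := by
      intro x hx
      rw [hpt k x hx, norm_mul, norm_div,
        Real.norm_of_nonneg (Real.rpow_nonneg hx.1.le _), norm_mul, norm_pow, norm_neg,
        norm_one, one_pow, one_mul,
        Real.norm_of_nonneg (Real.rpow_nonneg hδ.le _),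
        Real.norm_of_nonneg (mul_nonneg (by positivity) (hbk k).le)]
    rw [setIntegral_congr_fun measurableSet_Ioc heq, integral_const_mul, int_rpow ht.le (hc k)]
    have h2 : α - 1 + (β + (k:ℝ)) + 1 = α + β + k := by ring
    rw [h2]
    field_simp
  have hδk : ∀ k : ℕ, δ ^ (β + (k:ℝ)) = δ ^ β * δ ^ k := fun k => by
    rw [Real.rpow_add hδ, Real.rpow_natCast]
  have htk : ∀ k : ℕ, t ^ (α + β + (k:ℝ)) = t ^ (α + β) * t ^ k := fun k => by
    rw [Real.rpow_add ht, Real.rpow_natCast]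
  have hsummable : Summable fun k : ℕ => ∫ x in Set.Ioc (0:ℝ) t, ‖f k x‖ := by
    apply Summable.of_nonneg_of_le
      (fun k => by rw [hnorm k]; positivity)
      (fun k => ?_)
      ((Real.summable_pow_div_factorial (δ * t)).mul_left (δ ^ β * t ^ (α + β) / (β * (α + β))))
    rw [hnorm k, hδk k, htk k]
    have hfk : (0:ℝ) < k.factorial := by positivity
    rw [div_le_iff₀ (by positivity)]
    have h3 : δ ^ β * t ^ (α + β) / (β * (α + β)) * ((δ * t) ^ k / k.factorial)
        * (k.factorial * (β + k) * (α + β + k))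
        = δ ^ β * t ^ (α + β) * (δ ^ k * t ^ k)
          * (((β + k) * (α + β + k)) / (β * (α + β))) := by
      rw [mul_pow]; field_simp
    rw [h3]
    have h2 : (1:ℝ) ≤ ((β + k) * (α + β + k)) / (β * (α + β)) := by
      rw [le_div_iff₀ (by positivity)]
      have : (0:ℝ) ≤ k := Nat.cast_nonneg k
      nlinarith
    have h4 : (0:ℝ) ≤ δ ^ β * t ^ (α + β) * (δ ^ k * t ^ k) := by positivity
    nlinarith
  have swap := integral_tsum_of_summable_integral_norm hint hsummable
  have hexp : ∀ x ∈ Set.Ioc (0:ℝ) t,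
      x ^ (α - 1) * lowerGamma β (δ * x) = ∑' k : ℕ, f k x := by
    intro x hx
    rw [lowerGamma_eq_tsum hβ (mul_pos hδ hx.1), hf]
    simp only
    rw [tsum_mul_left]
  rw [setIntegral_congr_fun measurableSet_Ioc hexp, ← swap]
  -- now identify the series with the hypergeometric sum
  have hterm : ∀ k : ℕ, ∫ x in Set.Ioc (0:ℝ) t, f k x
      = (t ^ (α + β) * δ ^ β / β) * (1 / (α + β)) *
        (poch β k * poch (α + β) k / (poch (β + 1) k * poch (α + β + 1) k * (k.factorial : ℝ))
          * (-(t * δ)) ^ k) := by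
    intro k
    rw [key k, hδk k, htk k]
    have hb1 := poch_mul_add (x := β) k
    have hb2 := poch_mul_add (x := α + β) k
    have hp1 : poch (β + 1) k ≠ 0 := (poch_pos (by linarith) k).ne'
    have hp2 : poch (α + β + 1) k ≠ 0 := (poch_pos (by linarith) k).ne'
    have hq1 : poch β k = β * poch (β + 1) k / (β + k) := by
      rw [eq_div_iff (hbk k).ne']; exact hb1
    have hq2 : poch (α + β) k = (α + β) * poch (α + β + 1) k / (α + β + k) := by
      rw [eq_div_iff (habk k).ne']; exact hb2
    have hneg : (-(t * δ)) ^ k = (-1)^k * (t ^ k * δ ^ k) := by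
      rw [neg_pow, mul_pow]
    rw [hq1, hq2, hneg]
    have hfk : (k.factorial:ℝ) ≠ 0 := by positivity
    field_simp
  rw [tsum_congr hterm, F22, tsum_mul_left]
end
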